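/- Let $n \geq 1$, $k \geq 1$, and probabilities $0 = P_{-1} < P_0 \leq P_1 \leq \cdots \leq P_k = 1$. Let $X_1, \ldots, X_n$ be i.i.d. uniform on $[0,1]$, and define for each $i$ the level $L_i = \min\{\ell \geq 0 : X_i \leq P_\ell\}$. Let $M_n$ be the number of indices $i$ achieving the minimum level $L^* = \min_i L_i$. Then for $m > 0$: $P(M_n = m) = \binom{n}{m} P_0^m (1-P_0)^{n-m} + \sum_{\ell=1}^{k-1} \binom{n}{m}(P_\ell - P_{\ell-1})^m (1-P_\ell)^{n-m} + [m = n](1-P_{k-1})^n$. -/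

import Mathlib

open MeasureTheory
open scoped Classical

open scoped ENNReal


lemma piece_eq (n : ℕ) (a b : ℝ) (h0 : 0 ≤ a) (hab : a ≤ b) (hb1 : b ≤ 1) (m : ℕ) :
    {ω : Fin n → ℝ | (∀ i, ω i ∈ Set.Ioc (0:ℝ) 1) ∧ (∀ i, a < ω i) ∧
        (Finset.univ.filter fun i => ω i ≤ b).card = m}
      = ⋃ S ∈ Finset.powersetCard m (Finset.univ : Finset (Fin n)),
          Set.pi Set.univ (fun i => if i ∈ S then Set.Ioc a b else Set.Ioc b 1) := by
  ext ω
  simp only [Set.mem_setOf_eq, Set.mem_iUnion, Finset.mem_powersetCard_univ]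
  constructor
  · rintro ⟨h1, h2, h3⟩
    refine ⟨Finset.univ.filter fun i => ω i ≤ b, h3, ?_⟩
    intro i _
    by_cases hi : i ∈ Finset.univ.filter fun j => ω j ≤ b
    · simp only [hi, if_true]
      exact ⟨h2 i, (Finset.mem_filter.mp hi).2⟩
    · simp only [hi, if_false]
      have hnb : ¬ ω i ≤ b := fun h => hi (Finset.mem_filter.mpr ⟨Finset.mem_univ i, h⟩)
      exact ⟨lt_of_not_ge hnb, (h1 i).2⟩
  · rintro ⟨S, hS, hmem⟩
    have hin : ∀ i ∈ S, a < ω i ∧ ω i ≤ b := by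
      intro i hi
      have h := hmem i (Set.mem_univ i)
      simpa [hi] using h
    have hout : ∀ i, i ∉ S → b < ω i ∧ ω i ≤ 1 := by
      intro i hi
      have h := hmem i (Set.mem_univ i)
      simpa [hi] using h
    refine ⟨?_, ?_, ?_⟩
    · intro i; by_cases hi : i ∈ S
      · exact ⟨lt_of_le_of_lt h0 (hin i hi).1, le_trans (hin i hi).2 hb1⟩
      · exact ⟨lt_of_le_of_lt (le_trans h0 hab) (hout i hi).1, (hout i hi).2⟩
    · intro i; by_cases hi : i ∈ S
      · exact (hin i hi).1
      · exact lt_of_le_of_lt hab (hout i hi).1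
    · rw [← hS]; congr 1; ext i
      simp only [Finset.mem_filter, Finset.mem_univ, true_and]
      constructor
      · intro h; by_contra hi; exact absurd h (not_le.mpr (hout i hi).1)
      · intro hi; exact (hin i hi).2

lemma piece_meas (n : ℕ) (a b : ℝ) (h0 : 0 ≤ a) (hab : a ≤ b) (hb1 : b ≤ 1) (m : ℕ) :
    MeasurableSet {ω : Fin n → ℝ | (∀ i, ω i ∈ Set.Ioc (0:ℝ) 1) ∧ (∀ i, a < ω i) ∧
        (Finset.univ.filter fun i => ω i ≤ b).card = m} := by
  rw [piece_eq n a b h0 hab hb1 m]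
  refine Finset.measurableSet_biUnion _ fun S _ => ?_
  exact MeasurableSet.univ_pi fun i => by split_ifs <;> exact measurableSet_Ioc

lemma piece_measure (n : ℕ) (a b : ℝ) (h0 : 0 ≤ a) (hab : a ≤ b) (hb1 : b ≤ 1) (m : ℕ) :
    (Measure.pi fun _ : Fin n => volume.restrict (Set.Icc (0:ℝ) 1))
      {ω | (∀ i, ω i ∈ Set.Ioc (0:ℝ) 1) ∧ (∀ i, a < ω i) ∧
        (Finset.univ.filter fun i => ω i ≤ b).card = m}
      = (n.choose m : ℝ≥0∞) * ENNReal.ofReal (b - a) ^ m * ENNReal.ofReal (1 - b) ^ (n - m) := by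
  rw [piece_eq n a b h0 hab hb1 m]
  rw [measure_biUnion_finset ?disj ?meas]
  case meas =>
    intro S _
    exact MeasurableSet.univ_pi fun i => by split_ifs <;> exact measurableSet_Ioc
  case disj =>
    intro S hS T hT hST
    simp only [Finset.mem_coe, Finset.mem_powersetCard_univ] at hS hT
    obtain ⟨i, hiS, hiT⟩ : ∃ i, i ∈ S ∧ i ∉ T := by
      by_contra h
      push_neg at h
      exact hST (Finset.eq_of_subset_of_card_le h (by rw [hS, hT]))
    refine Set.disjoint_left.mpr fun ω hωS hωT => ?_
    have h1 := hωS i (Set.mem_univ i)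
    have h2 := hωT i (Set.mem_univ i)
    simp only [hiS, if_true, hiT, if_false] at h1 h2
    exact absurd h1.2 (not_le.mpr h2.1)
  have hsub1 : Set.Ioc a b ⊆ Set.Icc (0:ℝ) 1 := fun x hx =>
    ⟨le_trans h0 (le_of_lt hx.1), le_trans hx.2 hb1⟩
  have hsub2 : Set.Ioc b 1 ⊆ Set.Icc (0:ℝ) 1 := fun x hx =>
    ⟨le_trans (le_trans h0 hab) (le_of_lt hx.1), hx.2⟩
  have key : ∀ S ∈ Finset.powersetCard m (Finset.univ : Finset (Fin n)),
      (Measure.pi fun _ : Fin n => volume.restrict (Set.Icc (0:ℝ) 1))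
        (Set.pi Set.univ (fun i => if i ∈ S then Set.Ioc a b else Set.Ioc b 1))
      = ENNReal.ofReal (b - a) ^ m * ENNReal.ofReal (1 - b) ^ (n - m) := by
    intro S hS
    rw [Finset.mem_powersetCard_univ] at hS
    rw [Measure.pi_pi]
    have heach : ∀ i : Fin n,
        (volume.restrict (Set.Icc (0:ℝ) 1)) (if i ∈ S then Set.Ioc a b else Set.Ioc b 1)
        = if i ∈ S then ENNReal.ofReal (b - a) else ENNReal.ofReal (1 - b) := by
      intro i
      split_ifs
      · rw [Measure.restrict_apply measurableSet_Ioc, Set.inter_eq_left.mpr hsub1,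
          Real.volume_Ioc]
      · rw [Measure.restrict_apply measurableSet_Ioc, Set.inter_eq_left.mpr hsub2,
          Real.volume_Ioc]
    simp_rw [heach]
    rw [Finset.prod_ite, Finset.prod_const, Finset.prod_const]
    congr 1
    · congr 1
      rw [← hS]; congr 1
      ext i; simp
    · congr 1
      have : Finset.filter (fun i => ¬ i ∈ S) Finset.univ = Sᶜ := by
        ext i; simp
      rw [this, Finset.card_compl, hS]
      simp
  rw [Finset.sum_congr rfl key, Finset.sum_const, Finset.card_powersetCard]
  simp [mul_assoc]

/-- Implicit empty block scheme: `n` i.i.d. uniform hash values on `[0,1]`,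
level `L_i = min{ℓ : X_i ≤ P_ℓ}`, and `M_n` counts the indices achieving the
minimum level.  Distribution of `M_n` for `m > 0`. -/
theorem stmt10 (n k : ℕ) (hn : 1 ≤ n) (hk : 1 ≤ k)
    (P : ℕ → ℝ) (hP0 : 0 < P 0) (hmono : ∀ i, i < k → P i ≤ P (i + 1)) (hPk : P k = 1)
    (μ : Measure (Fin n → ℝ))
    (hμ : μ = Measure.pi fun _ : Fin n => volume.restrict (Set.Icc (0 : ℝ) 1))
    (L : (Fin n → ℝ) → Fin n → ℕ)
    (hL : ∀ ω i, L ω i = sInf {ℓ : ℕ | ω i ≤ P ℓ})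
    (M : (Fin n → ℝ) → ℕ)
    (hM : ∀ ω, M ω = (Finset.univ.filter fun i => L ω i = sInf (Set.range (L ω))).card)
    (m : ℕ) (hm : 0 < m) :
    (μ {ω | M ω = m}).toReal
      = (n.choose m : ℝ) * P 0 ^ m * (1 - P 0) ^ (n - m)
        + ∑ ℓ ∈ Finset.Ioo 0 k,
            (n.choose m : ℝ) * (P ℓ - P (ℓ - 1)) ^ m * (1 - P ℓ) ^ (n - m)
        + (if m = n then (1 - P (k - 1)) ^ n else 0) := by
  subst hμ
  -- monotonicity on [0, k]
  have mono : ∀ i j, i ≤ j → j ≤ k → P i ≤ P j := by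
    intro i j hij hjk
    induction j with
    | zero => exact le_of_eq (by rw [Nat.le_zero.mp hij])
    | succ j ih =>
      rcases Nat.eq_or_lt_of_le hij with h | h
      · rw [h]
      · exact le_trans (ih (Nat.lt_succ_iff.mp h) (le_trans (Nat.le_succ j) hjk))
          (hmono j (Nat.lt_of_succ_le hjk))
  set low : ℕ → ℝ := fun ℓ => if ℓ = 0 then 0 else P (ℓ - 1) with hlowdef'
  have hlowdef : ∀ ℓ, low ℓ = if ℓ = 0 then 0 else P (ℓ - 1) := fun ℓ => by rw [hlowdef']
  have hlow0 : ∀ ℓ, ℓ ≤ k → 0 ≤ low ℓ := by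
    intro ℓ hℓ
    rw [hlowdef]
    split_ifs with h
    · exact le_refl 0
    · exact le_of_lt (lt_of_lt_of_le hP0 (mono 0 (ℓ - 1) (Nat.zero_le _) (by omega)))
  have hlowle : ∀ ℓ, ℓ ≤ k → low ℓ ≤ P ℓ := by
    intro ℓ hℓ
    rw [hlowdef]
    split_ifs with h
    · subst h; exact le_of_lt hP0
    · exact mono (ℓ - 1) ℓ (by omega) hℓ
  have hP1 : ∀ ℓ, ℓ ≤ k → P ℓ ≤ 1 := fun ℓ hℓ => hPk ▸ mono ℓ k hℓ le_rfl
  -- level characterization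
  have LleK : ∀ ω : Fin n → ℝ, (∀ i, ω i ∈ Set.Ioc (0:ℝ) 1) → ∀ i, L ω i ≤ k := by
    intro ω hω i
    rw [hL]
    exact Nat.sInf_le (show ω i ≤ P k by rw [hPk]; exact (hω i).2)
  have char : ∀ ω : Fin n → ℝ, (∀ i, ω i ∈ Set.Ioc (0:ℝ) 1) → ∀ (i : Fin n) (ℓ : ℕ), ℓ ≤ k →
      (L ω i = ℓ ↔ (low ℓ < ω i ∧ ω i ≤ P ℓ)) := by
    intro ω hω i ℓ hℓ
    have hkmem : k ∈ {j : ℕ | ω i ≤ P j} := by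
      show ω i ≤ P k
      rw [hPk]; exact (hω i).2
    rw [hL]
    constructor
    · intro h
      have hmem : sInf {j : ℕ | ω i ≤ P j} ∈ {j : ℕ | ω i ≤ P j} := Nat.sInf_mem ⟨k, hkmem⟩
      rw [h] at hmem
      refine ⟨?_, hmem⟩
      by_cases h0 : ℓ = 0
      · rw [hlowdef, if_pos h0]; exact (hω i).1
      · have hlt : ℓ - 1 < sInf {j : ℕ | ω i ≤ P j} := by rw [h]; omega
        have hnm := Nat.notMem_of_lt_sInf hlt
        rw [hlowdef, if_neg h0]
        exact not_le.mp hnm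
    · rintro ⟨h1, h2⟩
      have hle : sInf {j : ℕ | ω i ≤ P j} ≤ ℓ := Nat.sInf_le h2
      rcases Nat.lt_or_ge (sInf {j : ℕ | ω i ≤ P j}) ℓ with hlt | hge
      · exfalso
        have hmem : sInf {j : ℕ | ω i ≤ P j} ∈ {j : ℕ | ω i ≤ P j} := Nat.sInf_mem ⟨k, hkmem⟩
        have h0 : ℓ ≠ 0 := by omega
        have hPle : P (sInf {j : ℕ | ω i ≤ P j}) ≤ P (ℓ - 1) := mono _ _ (by omega) (by omega)
        rw [hlowdef, if_neg h0] at h1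
        exact absurd (le_trans hmem hPle) (not_le.mpr h1)
      · omega
  set A : ℕ → Set (Fin n → ℝ) := fun ℓ =>
    {ω | (∀ i, ω i ∈ Set.Ioc (0:ℝ) 1) ∧ (∀ i, low ℓ < ω i) ∧
      (Finset.univ.filter fun i => ω i ≤ P ℓ).card = m} with hA
  have hAmem : ∀ ℓ (ω : Fin n → ℝ), ω ∈ A ℓ ↔
      ((∀ i, ω i ∈ Set.Ioc (0:ℝ) 1) ∧ (∀ i, low ℓ < ω i) ∧
      (Finset.univ.filter fun i => ω i ≤ P ℓ).card = m) := fun ℓ ω => Iff.rfl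
  -- the complement of the good set is null
  have hGmeas : MeasurableSet {ω : Fin n → ℝ | ∀ i, ω i ∈ Set.Ioc (0:ℝ) 1} := by
    have hEq : {ω : Fin n → ℝ | ∀ i, ω i ∈ Set.Ioc (0:ℝ) 1}
        = Set.pi Set.univ fun _ : Fin n => Set.Ioc (0:ℝ) 1 := by
      ext ω; simp [Set.mem_pi]
    rw [hEq]; exact MeasurableSet.univ_pi fun _ => measurableSet_Ioc
  have hGfull : (Measure.pi fun _ : Fin n => volume.restrict (Set.Icc (0:ℝ) 1))
      {ω : Fin n → ℝ | ∀ i, ω i ∈ Set.Ioc (0:ℝ) 1} = 1 := by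
    have hEq : {ω : Fin n → ℝ | ∀ i, ω i ∈ Set.Ioc (0:ℝ) 1}
        = Set.pi Set.univ fun _ : Fin n => Set.Ioc (0:ℝ) 1 := by
      ext ω; simp [Set.mem_pi]
    rw [hEq, Measure.pi_pi]
    have : (volume.restrict (Set.Icc (0:ℝ) 1)) (Set.Ioc (0:ℝ) 1) = 1 := by
      rw [Measure.restrict_apply measurableSet_Ioc,
        Set.inter_eq_left.mpr Set.Ioc_subset_Icc_self, Real.volume_Ioc]
      norm_num
    simp [this]
  have hμuniv : (Measure.pi fun _ : Fin n => volume.restrict (Set.Icc (0:ℝ) 1))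
      Set.univ = 1 := by
    rw [← Set.pi_univ (Set.univ : Set (Fin n)), Measure.pi_pi]
    have : (volume.restrict (Set.Icc (0:ℝ) 1)) (Set.univ : Set ℝ) = 1 := by
      rw [Measure.restrict_apply_univ, Real.volume_Icc]; norm_num
    simp [this]
  have hGcompl : (Measure.pi fun _ : Fin n => volume.restrict (Set.Icc (0:ℝ) 1))
      {ω : Fin n → ℝ | ∀ i, ω i ∈ Set.Ioc (0:ℝ) 1}ᶜ = 0 := by
    rw [measure_compl hGmeas (by rw [hGfull]; exact ENNReal.one_ne_top), hGfull, hμuniv, tsub_self]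
  -- the two inclusions
  have incl1 : (⋃ ℓ ∈ Finset.range (k+1), A ℓ) ⊆ {ω | M ω = m} := by
    intro ω hω
    simp only [Set.mem_iUnion, Finset.mem_range] at hω
    obtain ⟨ℓ, hℓk, hωA⟩ := hω
    have hℓk' : ℓ ≤ k := by omega
    obtain ⟨hG, hlow, hcard⟩ := (hAmem ℓ ω).mp hωA
    have hpos : 0 < (Finset.univ.filter fun i => ω i ≤ P ℓ).card := hcard ▸ hm
    obtain ⟨i0, hi0⟩ := Finset.card_pos.mp hpos
    have hi0' := (Finset.mem_filter.mp hi0).2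
    have hLi0 : L ω i0 = ℓ := (char ω hG i0 ℓ hℓk').mpr ⟨hlow i0, hi0'⟩
    have hmin : sInf (Set.range (L ω)) = ℓ := by
      apply le_antisymm
      · exact Nat.sInf_le ⟨i0, hLi0⟩
      · by_contra hc
        push_neg at hc
        obtain ⟨j, hj⟩ := Nat.sInf_mem (⟨L ω i0, ⟨i0, rfl⟩⟩ : (Set.range (L ω)).Nonempty)
        have hjk : L ω j ≤ k := LleK ω hG j
        have hcj := (char ω hG j (L ω j) hjk).mp rfl
        have hlt : L ω j < ℓ := by omega
        have hle2 : ω j ≤ P (ℓ - 1) := le_trans hcj.2 (mono _ _ (by omega) (by omega))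
        have hgt := hlow j
        rw [hlowdef, if_neg (by omega : ℓ ≠ 0)] at hgt
        linarith
    show M ω = m
    rw [hM, ← hcard]
    congr 1
    ext i
    simp only [Finset.mem_filter, Finset.mem_univ, true_and, hmin]
    constructor
    · intro h; exact ((char ω hG i ℓ hℓk').mp h).2
    · intro h; exact (char ω hG i ℓ hℓk').mpr ⟨hlow i, h⟩
  have incl2 : {ω | M ω = m} ⊆ (⋃ ℓ ∈ Finset.range (k+1), A ℓ)
      ∪ {ω : Fin n → ℝ | ∀ i, ω i ∈ Set.Ioc (0:ℝ) 1}ᶜ := by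
    intro ω hω
    by_cases hG : ∀ i, ω i ∈ Set.Ioc (0:ℝ) 1
    · left
      obtain ⟨i0, hi0⟩ := Nat.sInf_mem
        (⟨L ω ⟨0, hn⟩, ⟨⟨0, hn⟩, rfl⟩⟩ : (Set.range (L ω)).Nonempty)
      have hℓk : sInf (Set.range (L ω)) ≤ k := by rw [← hi0]; exact LleK ω hG i0
      have hlowall : ∀ i, low (sInf (Set.range (L ω))) < ω i := by
        intro i
        by_cases h0 : sInf (Set.range (L ω)) = 0
        · rw [hlowdef, if_pos h0]; exact (hG i).1
        · rw [hlowdef, if_neg h0]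
          by_contra hc
          push_neg at hc
          have h1 : L ω i ≤ sInf (Set.range (L ω)) - 1 := by
            rw [hL]; exact Nat.sInf_le hc
          have h2 : sInf (Set.range (L ω)) ≤ L ω i := Nat.sInf_le ⟨i, rfl⟩
          omega
      refine Set.mem_iUnion.mpr ⟨sInf (Set.range (L ω)), Set.mem_iUnion.mpr
        ⟨Finset.mem_range.mpr (by omega), (hAmem _ ω).mpr ⟨hG, hlowall, ?_⟩⟩⟩
      have hω' : M ω = m := hω
      rw [hM] at hω'
      rw [← hω']
      congr 1
      ext i
      simp only [Finset.mem_filter, Finset.mem_univ, true_and]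
      constructor
      · intro h; exact (char ω hG i _ hℓk).mpr ⟨hlowall i, h⟩
      · intro h; exact ((char ω hG i _ hℓk).mp h).2
    · right; exact hG
  -- disjointness
  have hAdisj' : ∀ ℓ ℓ', ℓ < ℓ' → ℓ' ≤ k → Disjoint (A ℓ) (A ℓ') := by
    intro ℓ ℓ' hlt hℓ'
    refine Set.disjoint_left.mpr fun ω h1 h2 => ?_
    obtain ⟨_, _, hcard⟩ := (hAmem ℓ ω).mp h1
    obtain ⟨_, hlow', _⟩ := (hAmem ℓ' ω).mp h2
    have hpos : 0 < (Finset.univ.filter fun i => ω i ≤ P ℓ).card := hcard ▸ hm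
    obtain ⟨i0, hi0⟩ := Finset.card_pos.mp hpos
    have hb1 := (Finset.mem_filter.mp hi0).2
    have hb2 := hlow' i0
    rw [hlowdef, if_neg (by omega : ℓ' ≠ 0)] at hb2
    have hPle : P ℓ ≤ P (ℓ' - 1) := mono _ _ (by omega) (by omega)
    linarith
  have hAdisj : (↑(Finset.range (k+1)) : Set ℕ).PairwiseDisjoint A := by
    intro ℓ hℓ ℓ' hℓ' hne
    simp only [Finset.coe_range, Set.mem_Iio] at hℓ hℓ'
    rcases Nat.lt_or_ge ℓ ℓ' with h | h
    · exact hAdisj' ℓ ℓ' h (by omega)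
    · exact (hAdisj' ℓ' ℓ (by omega) (by omega)).symm
  -- measure of the union
  have hAeq : ∀ ℓ, A ℓ = {ω : Fin n → ℝ | (∀ i, ω i ∈ Set.Ioc (0:ℝ) 1) ∧
      (∀ i, low ℓ < ω i) ∧ (Finset.univ.filter fun i => ω i ≤ P ℓ).card = m} :=
    fun ℓ => rfl
  have hunion : (Measure.pi fun _ : Fin n => volume.restrict (Set.Icc (0:ℝ) 1))
      (⋃ ℓ ∈ Finset.range (k+1), A ℓ)
      = ∑ ℓ ∈ Finset.range (k+1),
        (Measure.pi fun _ : Fin n => volume.restrict (Set.Icc (0:ℝ) 1)) (A ℓ) := by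
    refine measure_biUnion_finset hAdisj fun ℓ hℓ => ?_
    rw [Finset.mem_range] at hℓ
    rw [hAeq]
    exact piece_meas n (low ℓ) (P ℓ) (hlow0 ℓ (by omega)) (hlowle ℓ (by omega))
      (hP1 ℓ (by omega)) m
  have hμA : ∀ ℓ ∈ Finset.range (k+1),
      (Measure.pi fun _ : Fin n => volume.restrict (Set.Icc (0:ℝ) 1)) (A ℓ)
      = (n.choose m : ℝ≥0∞) * ENNReal.ofReal (P ℓ - low ℓ) ^ m
        * ENNReal.ofReal (1 - P ℓ) ^ (n - m) := by
    intro ℓ hℓ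
    rw [Finset.mem_range] at hℓ
    rw [hAeq]
    exact piece_measure n (low ℓ) (P ℓ) (hlow0 ℓ (by omega)) (hlowle ℓ (by omega))
      (hP1 ℓ (by omega)) m
  have hmain : (Measure.pi fun _ : Fin n => volume.restrict (Set.Icc (0:ℝ) 1))
      {ω | M ω = m}
      = ∑ ℓ ∈ Finset.range (k+1),
        (Measure.pi fun _ : Fin n => volume.restrict (Set.Icc (0:ℝ) 1)) (A ℓ) := by
    apply le_antisymm
    · calc (Measure.pi fun _ : Fin n => volume.restrict (Set.Icc (0:ℝ) 1)) {ω | M ω = m}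
          ≤ (Measure.pi fun _ : Fin n => volume.restrict (Set.Icc (0:ℝ) 1))
            ((⋃ ℓ ∈ Finset.range (k+1), A ℓ)
              ∪ {ω : Fin n → ℝ | ∀ i, ω i ∈ Set.Ioc (0:ℝ) 1}ᶜ) := measure_mono incl2
        _ ≤ (Measure.pi fun _ : Fin n => volume.restrict (Set.Icc (0:ℝ) 1))
              (⋃ ℓ ∈ Finset.range (k+1), A ℓ)
            + (Measure.pi fun _ : Fin n => volume.restrict (Set.Icc (0:ℝ) 1))
              {ω : Fin n → ℝ | ∀ i, ω i ∈ Set.Ioc (0:ℝ) 1}ᶜ := measure_union_le _ _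
        _ = ∑ ℓ ∈ Finset.range (k+1),
              (Measure.pi fun _ : Fin n => volume.restrict (Set.Icc (0:ℝ) 1)) (A ℓ) := by
            rw [hGcompl, add_zero, hunion]
    · rw [← hunion]
      exact measure_mono incl1
  rw [hmain, Finset.sum_congr rfl hμA]
  rw [ENNReal.toReal_sum (fun ℓ _ => by
    exact ENNReal.mul_ne_top (ENNReal.mul_ne_top (ENNReal.natCast_ne_top _)
      (ENNReal.pow_ne_top ENNReal.ofReal_ne_top)) (ENNReal.pow_ne_top ENNReal.ofReal_ne_top))]
  have hterm : ∀ ℓ ∈ Finset.range (k+1),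
      ((n.choose m : ℝ≥0∞) * ENNReal.ofReal (P ℓ - low ℓ) ^ m
        * ENNReal.ofReal (1 - P ℓ) ^ (n - m)).toReal
      = (n.choose m : ℝ) * (P ℓ - low ℓ) ^ m * (1 - P ℓ) ^ (n - m) := by
    intro ℓ hℓ
    rw [Finset.mem_range] at hℓ
    rw [ENNReal.toReal_mul, ENNReal.toReal_mul, ENNReal.toReal_pow, ENNReal.toReal_pow,
      ENNReal.toReal_ofReal (sub_nonneg.mpr (hlowle ℓ (by omega))),
      ENNReal.toReal_ofReal (sub_nonneg.mpr (hP1 ℓ (by omega)))]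
    norm_num
  rw [Finset.sum_congr rfl hterm]
  -- split the sum
  have hsplit : Finset.range (k+1) = insert 0 (insert k (Finset.Ioo 0 k)) := by
    ext x
    simp only [Finset.mem_range, Finset.mem_insert, Finset.mem_Ioo]
    omega
  rw [hsplit, Finset.sum_insert (by simp [Finset.mem_Ioo]; omega),
    Finset.sum_insert (by simp [Finset.mem_Ioo])]
  have hf0 : (n.choose m : ℝ) * (P 0 - low 0) ^ m * (1 - P 0) ^ (n - m)
      = (n.choose m : ℝ) * P 0 ^ m * (1 - P 0) ^ (n - m) := by
    rw [hlowdef]; norm_num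
  have hfk : (n.choose m : ℝ) * (P k - low k) ^ m * (1 - P k) ^ (n - m)
      = if m = n then (1 - P (k - 1)) ^ n else 0 := by
    rw [hlowdef, if_neg (by omega : k ≠ 0), hPk]
    by_cases hmn : m = n
    · rw [if_pos hmn, hmn]
      simp
    · rw [if_neg hmn]
      by_cases hle : m ≤ n
      · have hne : n - m ≠ 0 := by omega
        rw [sub_self, zero_pow hne, mul_zero]
      · rw [Nat.choose_eq_zero_of_lt (by omega)]
        simp
  have hfmid : ∀ ℓ ∈ Finset.Ioo 0 k,
      (n.choose m : ℝ) * (P ℓ - low ℓ) ^ m * (1 - P ℓ) ^ (n - m)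
      = (n.choose m : ℝ) * (P ℓ - P (ℓ - 1)) ^ m * (1 - P ℓ) ^ (n - m) := by
    intro ℓ hℓ
    rw [Finset.mem_Ioo] at hℓ
    rw [hlowdef, if_neg (by omega : ℓ ≠ 0)]
  rw [hf0, hfk, Finset.sum_congr rfl hfmid]
  ring
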